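/- Let Ω ⊆ ℂ^g be open and σ : Ω → ℂ analytic, and fix indices i, j, k, l, m ∈ {1,…,g}. Define on {u ∈ Ω : σ(u) ≠ 0} the function B_{ijklm} := ℘_{ij}℘_{klm} + (1/3)·(℘_{jk}℘_{ilm} + ℘_{jl}℘_{ikm} + ℘_{jm}℘_{ikl} − 2℘_{kl}℘_{ijm} − 2℘_{km}℘_{ijl} − 2℘_{lm}℘_{ijk}). Then there exists an analytic function G : Ω → ℂ such that σ(u)³·B_{ijklm}(u) = G(u) for all u ∈ Ω with σ(u) ≠ 0; that is, although each individual term of B_{ijklm} has poles of order 5 along the zero set of σ, both the order-5 and order-4 poles cancel and B_{ijklm} has poles of order at most 3. -/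

import Mathlib

/-- Partial derivative in the `i`-th coordinate direction of a function on `ℂ^g`. -/
noncomputable def pd {g : ℕ} (i : Fin g) (f : (Fin g → ℂ) → ℂ) : (Fin g → ℂ) → ℂ :=
  fun u => fderiv ℂ f u (Pi.single i 1)

/-- The 2-index Kleinian ℘-function `℘_{ij} = −∂ᵢ∂ⱼ log σ`, written out as
`(∂ᵢσ·∂ⱼσ − σ·∂ᵢ∂ⱼσ)/σ²`. -/
noncomputable def wp2 {g : ℕ} (σ : (Fin g → ℂ) → ℂ) (i j : Fin g) :
    (Fin g → ℂ) → ℂ :=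
  fun u => (pd i σ u * pd j σ u - σ u * pd i (pd j σ) u) / (σ u) ^ 2

/-- The 3-index Kleinian ℘-function `℘_{ijk} = ∂ₖ℘_{ij}`. -/
noncomputable def wp3 {g : ℕ} (σ : (Fin g → ℂ) → ℂ) (i j k : Fin g) :
    (Fin g → ℂ) → ℂ :=
  pd k (wp2 σ i j)

/-- The function `B_{ijklm} = ℘_{ij}℘_{klm} + (1/3)(℘_{jk}℘_{ilm} + ℘_{jl}℘_{ikm}
+ ℘_{jm}℘_{ikl} − 2℘_{kl}℘_{ijm} − 2℘_{km}℘_{ijl} − 2℘_{lm}℘_{ijk})`. -/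
noncomputable def Bfun {g : ℕ} (σ : (Fin g → ℂ) → ℂ) (i j k l m : Fin g) :
    (Fin g → ℂ) → ℂ :=
  fun u => wp2 σ i j u * wp3 σ k l m u
    + (1/3 : ℂ) * (wp2 σ j k u * wp3 σ i l m u + wp2 σ j l u * wp3 σ i k m u
      + wp2 σ j m u * wp3 σ i k l u - 2 * wp2 σ k l u * wp3 σ i j m u
      - 2 * wp2 σ k m u * wp3 σ i j l u - 2 * wp2 σ l m u * wp3 σ i j k u)

set_option maxHeartbeats 2000000
open Filter

section aux

variable {g : ℕ} {Ω : Set (Fin g → ℂ)} {σ f h : (Fin g → ℂ) → ℂ} {u : Fin g → ℂ}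

lemma pd_analytic (hσ : AnalyticOnNhd ℂ σ Ω) (a : Fin g) :
    AnalyticOnNhd ℂ (pd a σ) Ω := by
  have h1 : AnalyticOnNhd ℂ (fderiv ℂ σ) Ω := hσ.fderiv
  exact (ContinuousLinearMap.apply ℂ ℂ (Pi.single a (1 : ℂ))).comp_analyticOnNhd h1

lemma pd_congr (k : Fin g) (hfh : f =ᶠ[nhds u] h) : pd k f u = pd k h u := by
  unfold pd; rw [hfh.fderiv_eq]

lemma pd_mul (k : Fin g) (hf : DifferentiableAt ℂ f u) (hh : DifferentiableAt ℂ h u) :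
    pd k (fun y => f y * h y) u = pd k f u * h u + f u * pd k h u := by
  unfold pd
  rw [fderiv_fun_mul hf hh]
  simp only [ContinuousLinearMap.add_apply, ContinuousLinearMap.smul_apply, smul_eq_mul]
  ring

lemma pd_sub (k : Fin g) (hf : DifferentiableAt ℂ f u) (hh : DifferentiableAt ℂ h u) :
    pd k (fun y => f y - h y) u = pd k f u - pd k h u := by
  unfold pd
  rw [fderiv_fun_sub hf hh]
  simp only [ContinuousLinearMap.sub_apply]

lemma pd_swap (hσ : AnalyticOnNhd ℂ σ Ω) (a b : Fin g) (hu : u ∈ Ω) :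
    pd a (pd b σ) u = pd b (pd a σ) u := by
  have hdf : DifferentiableAt ℂ (fderiv ℂ σ) u := ((hσ.fderiv) u hu).differentiableAt
  have h1 : ∀ v w : Fin g → ℂ, fderiv ℂ (fun y => fderiv ℂ σ y v) u w
      = fderiv ℂ (fderiv ℂ σ) u w v := by
    intro v w
    have h2 := fderiv_clm_apply (c := fderiv ℂ σ) (u := fun _ : Fin g → ℂ => v)
      hdf (differentiableAt_const v)
    rw [show (fun y => fderiv ℂ σ y v) = (fun y => fderiv ℂ σ y ((fun _ : Fin g → ℂ => v) y))
      from rfl, h2]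
    simp
  have hsymm : IsSymmSndFDerivAt ℂ σ u :=
    ContDiffAt.isSymmSndFDerivAt (n := 2) (AnalyticAt.contDiffAt (hσ u hu)) (by simp [minSmoothness_of_isRCLikeNormedField])
  show fderiv ℂ (fun y => fderiv ℂ σ y (Pi.single b 1)) u (Pi.single a 1)
      = fderiv ℂ (fun y => fderiv ℂ σ y (Pi.single a 1)) u (Pi.single b 1)
  rw [h1, h1]
  exact hsymm _ _

lemma wp3_eq (hσ : AnalyticOnNhd ℂ σ Ω) (a b c : Fin g) (hu : u ∈ Ω) (h0 : σ u ≠ 0) :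
    wp3 σ a b c u =
      (σ u * (pd c (pd a σ) u * pd b σ u + pd a σ u * pd c (pd b σ) u
          - pd c σ u * pd a (pd b σ) u - σ u * pd c (pd a (pd b σ)) u)
        - 2 * pd c σ u * (pd a σ u * pd b σ u - σ u * pd a (pd b σ) u)) / σ u ^ 3 := by
  have dσ : DifferentiableAt ℂ σ u := (hσ u hu).differentiableAt
  have da : DifferentiableAt ℂ (pd a σ) u := (pd_analytic hσ a u hu).differentiableAt
  have db : DifferentiableAt ℂ (pd b σ) u := (pd_analytic hσ b u hu).differentiableAt
  have dab : DifferentiableAt ℂ (pd a (pd b σ)) u :=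
    (pd_analytic (pd_analytic hσ b) a u hu).differentiableAt
  set N : (Fin g → ℂ) → ℂ := fun y => pd a σ y * pd b σ y - σ y * pd a (pd b σ) y with hN
  have dN : DifferentiableAt ℂ N u := (da.mul db).sub (dσ.mul dab)
  have dσ2 : DifferentiableAt ℂ (fun y => σ y ^ 2) u := dσ.pow 2
  have dw : DifferentiableAt ℂ (wp2 σ a b) u := by
    have : wp2 σ a b = fun y => N y * (σ y ^ 2)⁻¹ := by
      funext y; simp [wp2, hN, div_eq_mul_inv]
    rw [this]
    exact dN.mul (dσ2.inv (pow_ne_zero 2 h0))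
  have hev : (fun y => wp2 σ a b y * σ y ^ 2) =ᶠ[nhds u] N := by
    have hne : ∀ᶠ y in nhds u, σ y ≠ 0 := (hσ u hu).continuousAt.eventually_ne h0
    filter_upwards [hne] with y hy
    show N y / σ y ^ 2 * σ y ^ 2 = N y
    field_simp
  have key : pd c (fun y => wp2 σ a b y * σ y ^ 2) u = pd c N u := pd_congr c hev
  have hsq : pd c (fun y => σ y ^ 2) u = 2 * σ u * pd c σ u := by
    have h2 : (fun y => σ y ^ 2) = fun y => σ y * σ y := by funext y; ring
    rw [h2, pd_mul c dσ dσ]; ring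
  have hL : pd c (fun y => wp2 σ a b y * σ y ^ 2) u
      = wp3 σ a b c u * σ u ^ 2 + wp2 σ a b u * (2 * σ u * pd c σ u) := by
    rw [pd_mul c dw dσ2, hsq]; rfl
  have heq : wp3 σ a b c u * σ u ^ 2 + wp2 σ a b u * (2 * σ u * pd c σ u) = pd c N u :=
    hL.symm.trans key
  have hNc : pd c N u = pd c (pd a σ) u * pd b σ u + pd a σ u * pd c (pd b σ) u
      - (pd c σ u * pd a (pd b σ) u + σ u * pd c (pd a (pd b σ)) u) := by
    rw [hN, pd_sub (f := fun y => pd a σ y * pd b σ y) (h := fun y => σ y * pd a (pd b σ) y) c (da.mul db) (dσ.mul dab), pd_mul c da db, pd_mul c dσ dab]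
  have hw2u : wp2 σ a b u = N u / σ u ^ 2 := rfl
  have hNu : N u = pd a σ u * pd b σ u - σ u * pd a (pd b σ) u := rfl
  rw [hNc, hw2u, hNu] at heq
  have hwp3 : wp3 σ a b c u = ((pd c (pd a σ) u * pd b σ u + pd a σ u * pd c (pd b σ) u
      - (pd c σ u * pd a (pd b σ) u + σ u * pd c (pd a (pd b σ)) u))
      - (pd a σ u * pd b σ u - σ u * pd a (pd b σ) u) / σ u ^ 2
        * (2 * σ u * pd c σ u)) / σ u ^ 2 := by
    rw [eq_div_iff (pow_ne_zero 2 h0), eq_sub_iff_add_eq]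
    exact heq
  rw [hwp3]
  field_simp
  ring

end aux

/-- For `σ` analytic on an open `Ω ⊆ ℂ^g` and any indices `i,j,k,l,m`, there is
a function `G` analytic on all of `Ω` with `σ³·B_{ijklm} = G` on `{σ ≠ 0}`:
although each individual term of `B_{ijklm}` has poles of order 5 along the zero
set of `σ`, the order-5 and order-4 poles cancel and `B_{ijklm}` has poles of
order at most 3. -/
theorem stmt5 {g : ℕ} (Ω : Set (Fin g → ℂ)) (hΩopen : IsOpen Ω)
    (σ : (Fin g → ℂ) → ℂ) (hσ : AnalyticOnNhd ℂ σ Ω)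
    (i j k l m : Fin g) :
    ∃ G : (Fin g → ℂ) → ℂ, AnalyticOnNhd ℂ G Ω ∧
      ∀ u ∈ Ω, σ u ≠ 0 → (σ u) ^ 3 * Bfun σ i j k l m u = G u := by
  refine ⟨fun u =>
      (1 : ℂ) * (σ u) * (pd i (pd j σ) u) * (pd m (pd k (pd l σ)) u)
      + (1/3 : ℂ) * (σ u) * (pd j (pd k σ) u) * (pd m (pd i (pd l σ)) u)
      + (1/3 : ℂ) * (σ u) * (pd j (pd l σ) u) * (pd m (pd i (pd k σ)) u)
      + (1/3 : ℂ) * (σ u) * (pd j (pd m σ) u) * (pd l (pd i (pd k σ)) u)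
      + (-2/3 : ℂ) * (σ u) * (pd k (pd i (pd j σ)) u) * (pd l (pd m σ) u)
      + (-2/3 : ℂ) * (σ u) * (pd k (pd l σ) u) * (pd m (pd i (pd j σ)) u)
      + (-2/3 : ℂ) * (σ u) * (pd k (pd m σ) u) * (pd l (pd i (pd j σ)) u)
      + (-1 : ℂ) * (pd i σ u) * (pd j σ u) * (pd m (pd k (pd l σ)) u)
      + (1/3 : ℂ) * (pd i σ u) * (pd j (pd k σ) u) * (pd l (pd m σ) u)
      + (1/3 : ℂ) * (pd i σ u) * (pd j (pd l σ) u) * (pd k (pd m σ) u)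
      + (1/3 : ℂ) * (pd i σ u) * (pd j (pd m σ) u) * (pd k (pd l σ) u)
      + (-1/3 : ℂ) * (pd i (pd j σ) u) * (pd k σ u) * (pd l (pd m σ) u)
      + (-1/3 : ℂ) * (pd i (pd j σ) u) * (pd k (pd l σ) u) * (pd m σ u)
      + (-1/3 : ℂ) * (pd i (pd j σ) u) * (pd k (pd m σ) u) * (pd l σ u)
      + (2/3 : ℂ) * (pd i (pd k σ) u) * (pd j σ u) * (pd l (pd m σ) u)
      + (-1/3 : ℂ) * (pd i (pd k σ) u) * (pd j (pd l σ) u) * (pd m σ u)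
      + (-1/3 : ℂ) * (pd i (pd k σ) u) * (pd j (pd m σ) u) * (pd l σ u)
      + (2/3 : ℂ) * (pd i (pd l σ) u) * (pd j σ u) * (pd k (pd m σ) u)
      + (-1/3 : ℂ) * (pd i (pd l σ) u) * (pd j (pd k σ) u) * (pd m σ u)
      + (-1/3 : ℂ) * (pd i (pd l σ) u) * (pd j (pd m σ) u) * (pd k σ u)
      + (2/3 : ℂ) * (pd i (pd m σ) u) * (pd j σ u) * (pd k (pd l σ) u)
      + (-1/3 : ℂ) * (pd i (pd m σ) u) * (pd j (pd k σ) u) * (pd l σ u)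
      + (-1/3 : ℂ) * (pd i (pd m σ) u) * (pd j (pd l σ) u) * (pd k σ u)
      + (-1/3 : ℂ) * (pd j σ u) * (pd k σ u) * (pd m (pd i (pd l σ)) u)
      + (-1/3 : ℂ) * (pd j σ u) * (pd l σ u) * (pd m (pd i (pd k σ)) u)
      + (-1/3 : ℂ) * (pd j σ u) * (pd l (pd i (pd k σ)) u) * (pd m σ u)
      + (2/3 : ℂ) * (pd k σ u) * (pd l σ u) * (pd m (pd i (pd j σ)) u)
      + (2/3 : ℂ) * (pd k σ u) * (pd l (pd i (pd j σ)) u) * (pd m σ u)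
      + (2/3 : ℂ) * (pd k (pd i (pd j σ)) u) * (pd l σ u) * (pd m σ u), ?_, ?_⟩
  · have hi : AnalyticOnNhd ℂ (pd i σ) Ω := (pd_analytic hσ i)
    have hj : AnalyticOnNhd ℂ (pd j σ) Ω := (pd_analytic hσ j)
    have hk : AnalyticOnNhd ℂ (pd k σ) Ω := (pd_analytic hσ k)
    have hl : AnalyticOnNhd ℂ (pd l σ) Ω := (pd_analytic hσ l)
    have hm : AnalyticOnNhd ℂ (pd m σ) Ω := (pd_analytic hσ m)
    have hij : AnalyticOnNhd ℂ (pd i (pd j σ)) Ω := (pd_analytic (pd_analytic hσ j) i)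
    have hik : AnalyticOnNhd ℂ (pd i (pd k σ)) Ω := (pd_analytic (pd_analytic hσ k) i)
    have hil : AnalyticOnNhd ℂ (pd i (pd l σ)) Ω := (pd_analytic (pd_analytic hσ l) i)
    have him : AnalyticOnNhd ℂ (pd i (pd m σ)) Ω := (pd_analytic (pd_analytic hσ m) i)
    have hjk : AnalyticOnNhd ℂ (pd j (pd k σ)) Ω := (pd_analytic (pd_analytic hσ k) j)
    have hjl : AnalyticOnNhd ℂ (pd j (pd l σ)) Ω := (pd_analytic (pd_analytic hσ l) j)
    have hjm : AnalyticOnNhd ℂ (pd j (pd m σ)) Ω := (pd_analytic (pd_analytic hσ m) j)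
    have hkl : AnalyticOnNhd ℂ (pd k (pd l σ)) Ω := (pd_analytic (pd_analytic hσ l) k)
    have hkm : AnalyticOnNhd ℂ (pd k (pd m σ)) Ω := (pd_analytic (pd_analytic hσ m) k)
    have hlm : AnalyticOnNhd ℂ (pd l (pd m σ)) Ω := (pd_analytic (pd_analytic hσ m) l)
    have hkij : AnalyticOnNhd ℂ (pd k (pd i (pd j σ))) Ω := (pd_analytic (pd_analytic (pd_analytic hσ j) i) k)
    have hlij : AnalyticOnNhd ℂ (pd l (pd i (pd j σ))) Ω := (pd_analytic (pd_analytic (pd_analytic hσ j) i) l)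
    have hlik : AnalyticOnNhd ℂ (pd l (pd i (pd k σ))) Ω := (pd_analytic (pd_analytic (pd_analytic hσ k) i) l)
    have hmij : AnalyticOnNhd ℂ (pd m (pd i (pd j σ))) Ω := (pd_analytic (pd_analytic (pd_analytic hσ j) i) m)
    have hmik : AnalyticOnNhd ℂ (pd m (pd i (pd k σ))) Ω := (pd_analytic (pd_analytic (pd_analytic hσ k) i) m)
    have hmil : AnalyticOnNhd ℂ (pd m (pd i (pd l σ))) Ω := (pd_analytic (pd_analytic (pd_analytic hσ l) i) m)
    have hmkl : AnalyticOnNhd ℂ (pd m (pd k (pd l σ))) Ω := (pd_analytic (pd_analytic (pd_analytic hσ l) k) m)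
    exact ((((((((((((((((((((((((((((((analyticOnNhd_const.mul hσ).mul hij).mul hmkl).add
      (((analyticOnNhd_const.mul hσ).mul hjk).mul hmil)).add
      (((analyticOnNhd_const.mul hσ).mul hjl).mul hmik)).add
      (((analyticOnNhd_const.mul hσ).mul hjm).mul hlik)).add
      (((analyticOnNhd_const.mul hσ).mul hkij).mul hlm)).add
      (((analyticOnNhd_const.mul hσ).mul hkl).mul hmij)).add
      (((analyticOnNhd_const.mul hσ).mul hkm).mul hlij)).add
      (((analyticOnNhd_const.mul hi).mul hj).mul hmkl)).add
      (((analyticOnNhd_const.mul hi).mul hjk).mul hlm)).add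
      (((analyticOnNhd_const.mul hi).mul hjl).mul hkm)).add
      (((analyticOnNhd_const.mul hi).mul hjm).mul hkl)).add
      (((analyticOnNhd_const.mul hij).mul hk).mul hlm)).add
      (((analyticOnNhd_const.mul hij).mul hkl).mul hm)).add
      (((analyticOnNhd_const.mul hij).mul hkm).mul hl)).add
      (((analyticOnNhd_const.mul hik).mul hj).mul hlm)).add
      (((analyticOnNhd_const.mul hik).mul hjl).mul hm)).add
      (((analyticOnNhd_const.mul hik).mul hjm).mul hl)).add
      (((analyticOnNhd_const.mul hil).mul hj).mul hkm)).add
      (((analyticOnNhd_const.mul hil).mul hjk).mul hm)).add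
      (((analyticOnNhd_const.mul hil).mul hjm).mul hk)).add
      (((analyticOnNhd_const.mul him).mul hj).mul hkl)).add
      (((analyticOnNhd_const.mul him).mul hjk).mul hl)).add
      (((analyticOnNhd_const.mul him).mul hjl).mul hk)).add
      (((analyticOnNhd_const.mul hj).mul hk).mul hmil)).add
      (((analyticOnNhd_const.mul hj).mul hl).mul hmik)).add
      (((analyticOnNhd_const.mul hj).mul hlik).mul hm)).add
      (((analyticOnNhd_const.mul hk).mul hl).mul hmij)).add
      (((analyticOnNhd_const.mul hk).mul hlij).mul hm)).add
      (((analyticOnNhd_const.mul hkij).mul hl).mul hm)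
  · intro u hu h0
    have e1 := wp3_eq hσ k l m hu h0
    have e2 := wp3_eq hσ i l m hu h0
    have e3 := wp3_eq hσ i k m hu h0
    have e4 := wp3_eq hσ i k l hu h0
    have e5 := wp3_eq hσ i j m hu h0
    have e6 := wp3_eq hσ i j l hu h0
    have e7 := wp3_eq hσ i j k hu h0
    have s1 : pd m (pd k σ) u = pd k (pd m σ) u := pd_swap hσ m k hu
    have s2 : pd m (pd l σ) u = pd l (pd m σ) u := pd_swap hσ m l hu
    have s3 : pd m (pd i σ) u = pd i (pd m σ) u := pd_swap hσ m i hu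
    have s4 : pd l (pd i σ) u = pd i (pd l σ) u := pd_swap hσ l i hu
    have s5 : pd l (pd k σ) u = pd k (pd l σ) u := pd_swap hσ l k hu
    have s6 : pd m (pd j σ) u = pd j (pd m σ) u := pd_swap hσ m j hu
    have s7 : pd l (pd j σ) u = pd j (pd l σ) u := pd_swap hσ l j hu
    have s8 : pd k (pd i σ) u = pd i (pd k σ) u := pd_swap hσ k i hu
    have s9 : pd k (pd j σ) u = pd j (pd k σ) u := pd_swap hσ k j hu
    simp only [Bfun, wp2]
    rw [e1, e2, e3, e4, e5, e6, e7, s1, s2, s3, s4, s5, s6, s7, s8, s9]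
    field_simp [h0]
    ring
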